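/- arXiv:1502.00993 — 12 statements merged into one kernel-verified Lean document; each statement's English description precedes it below -/
import Mathlib

section
/- Let (V,E) be a link stream, Δ > 0, let (X,[b,e]) be a Δ-clique, and let l be a real number with max(b, e−Δ) ≤ l ≤ e such that for all distinct u, v ∈ X there exists t ∈ [l, e] with (t,u,v) ∈ E. Then (X,[b, l+Δ]) is a Δ-clique. (This is the right-extension step proved inside Lemma 1 of the paper: if l is the earliest, over pairs of X, of the last occurrence time of a link in [b,e], then the time interval can be extended to l+Δ.) -/
/-- A link stream has node type `α` (finite) and a finite set `E` of timed links
`(t, u, v) : ℝ × α × α`.  For a duration `Δ`, `(X, [b, e])` is a `Δ`-clique when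
`2 ≤ |X|`, `b ≤ e`, and every pair of distinct nodes of `X` interacts at least once
in every window `[τ, min (τ + Δ) e]` for `τ ∈ [b, max (e - Δ) b]`. -/
def IsDeltaClique {α : Type*} (E : Finset (ℝ × α × α)) (Δ : ℝ)
    (X : Finset α) (b e : ℝ) : Prop :=
  2 ≤ X.card ∧ b ≤ e ∧
    ∀ u ∈ X, ∀ v ∈ X, u ≠ v →
      ∀ τ : ℝ, b ≤ τ → τ ≤ max (e - Δ) b →
        ∃ t : ℝ, τ ≤ t ∧ t ≤ min (τ + Δ) e ∧ (t, u, v) ∈ E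

/-- A `Δ`-clique `(X, [b, e])` is maximal if any `Δ`-clique `(X', [b', e'])` with
`X ⊆ X'` and `[b, e] ⊆ [b', e']` equals it. -/
def IsMaxDeltaClique {α : Type*} (E : Finset (ℝ × α × α)) (Δ : ℝ)
    (X : Finset α) (b e : ℝ) : Prop :=
  IsDeltaClique E Δ X b e ∧
    ∀ X' : Finset α, ∀ b' e' : ℝ,
      IsDeltaClique E Δ X' b' e' → X ⊆ X' → b' ≤ b → e ≤ e' →
        X' = X ∧ b' = b ∧ e' = e

/-- right-extension step: if `(X, [b, e])` is a `Δ`-clique and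
`l ∈ [max b (e - Δ), e]` is such that every pair of distinct nodes of `X` has a
link in `[l, e]`, then `(X, [b, l + Δ])` is a `Δ`-clique. -/
theorem right_extension {α : Type*} [Fintype α] [DecidableEq α]
    (E : Finset (ℝ × α × α)) (Δ : ℝ) (hΔ : 0 < Δ)
    (hsym : ∀ t u v, (t, u, v) ∈ E → (t, v, u) ∈ E)
    (hloop : ∀ t v, (t, v, v) ∉ E)
    (X : Finset α) (b e : ℝ) (hC : IsDeltaClique E Δ X b e)
    (l : ℝ) (hl₁ : max b (e - Δ) ≤ l) (hl₂ : l ≤ e)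
    (hlast : ∀ u ∈ X, ∀ v ∈ X, u ≠ v →
      ∃ t : ℝ, l ≤ t ∧ t ≤ e ∧ (t, u, v) ∈ E) :
    IsDeltaClique E Δ X b (l + Δ) := by
  obtain ⟨hcard, hbe, hpair⟩ := hC
  have hbl : b ≤ l := le_trans (le_max_left _ _) hl₁
  have hel : e - Δ ≤ l := le_trans (le_max_right _ _) hl₁
  refine ⟨hcard, le_trans hbl (by linarith), ?_⟩
  intro u hu v hv huv τ hτ₁ hτ₂
  have hτl : τ ≤ l := by
    rcases le_max_iff.mp hτ₂ with h | h
    · linarith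
    · linarith
  by_cases h : τ ≤ max (e - Δ) b
  · obtain ⟨t, ht₁, ht₂, ht₃⟩ := hpair u hu v hv huv τ hτ₁ h
    exact ⟨t, ht₁, le_trans ht₂ (min_le_min le_rfl (by linarith)), ht₃⟩
  · push_neg at h
    have : e - Δ < τ := lt_of_le_of_lt (le_max_left _ _) h
    obtain ⟨t, ht₁, ht₂, ht₃⟩ := hlast u hu v hv huv
    exact ⟨t, le_trans hτl ht₁, le_min (by linarith) (by linarith), ht₃⟩
end

section
/- Let (V,E) be a link stream, Δ > 0, let (X,[b,e]) be a Δ-clique, and let f be a real number with b ≤ f ≤ min(b+Δ, e) such that for all distinct u, v ∈ X there exists t ∈ [b, f] with (t,u,v) ∈ E. Then (X,[f−Δ, e]) is a Δ-clique. (This is the left-extension step proved inside Lemma 1 of the paper: if f is the latest, over pairs of X, of the first occurrence time of a link in [b,e], then the time interval can be extended back to f−Δ.) -/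
/-- left-extension step: if `(X, [b, e])` is a `Δ`-clique and
`f ∈ [b, min (b + Δ) e]` is such that every pair of distinct nodes of `X` has a
link in `[b, f]`, then `(X, [f - Δ, e])` is a `Δ`-clique. -/
theorem left_extension {α : Type*} [Fintype α] [DecidableEq α]
    (E : Finset (ℝ × α × α)) (Δ : ℝ) (hΔ : 0 < Δ)
    (hsym : ∀ t u v, (t, u, v) ∈ E → (t, v, u) ∈ E)
    (hloop : ∀ t v, (t, v, v) ∉ E)
    (X : Finset α) (b e : ℝ) (hC : IsDeltaClique E Δ X b e)
    (f : ℝ) (hf₁ : b ≤ f) (hf₂ : f ≤ min (b + Δ) e)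
    (hfirst : ∀ u ∈ X, ∀ v ∈ X, u ≠ v →
      ∃ t : ℝ, b ≤ t ∧ t ≤ f ∧ (t, u, v) ∈ E) :
    IsDeltaClique E Δ X (f - Δ) e := by
  obtain ⟨hcard, hbe, hpair⟩ := hC
  have hfb : f - Δ ≤ b := by
    have := le_trans hf₂ (min_le_left _ _); linarith
  have hfe : f ≤ e := le_trans hf₂ (min_le_right _ _)
  refine ⟨hcard, by linarith, fun u hu v hv huv τ hτ₁ hτ₂ => ?_⟩
  rcases le_or_gt τ b with hτb | hτb
  · obtain ⟨t, ht₁, ht₂, htE⟩ := hfirst u hu v hv huv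
    exact ⟨t, le_trans hτb ht₁, le_min (by linarith) (le_trans ht₂ hfe), htE⟩
  · have hτ₂' : τ ≤ max (e - Δ) b := by
      rcases max_cases (e - Δ) (f - Δ) with ⟨h1, _⟩ | ⟨h1, _⟩ <;>
        · rw [h1] at hτ₂; first
            | exact le_max_of_le_left hτ₂
            | linarith
    exact hpair u hu v hv huv τ hτb.le hτ₂'
end

section
/- Let (V,E) be a link stream, Δ > 0, and suppose both (X,[b,e]) and (X,[b',e']) are Δ-cliques with b' ≤ b ≤ e ≤ e'. Then (X,[b',e]) and (X,[b,e']) are also Δ-cliques. (One-sided restrictions of a larger time interval containing a Δ-clique on the same node set are again Δ-cliques.) -/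
/-- if `(X, [b, e])` and `(X, [b', e'])` are `Δ`-cliques with
`b' ≤ b ≤ e ≤ e'`, then `(X, [b', e])` and `(X, [b, e'])` are `Δ`-cliques too. -/
theorem one_sided_restriction {α : Type*} [Fintype α] [DecidableEq α]
    (E : Finset (ℝ × α × α)) (Δ : ℝ) (hΔ : 0 < Δ)
    (hsym : ∀ t u v, (t, u, v) ∈ E → (t, v, u) ∈ E)
    (hloop : ∀ t v, (t, v, v) ∉ E)
    (X : Finset α) (b e b' e' : ℝ)
    (hC : IsDeltaClique E Δ X b e) (hC' : IsDeltaClique E Δ X b' e')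
    (hb : b' ≤ b) (he : e ≤ e') :
    IsDeltaClique E Δ X b' e ∧ IsDeltaClique E Δ X b e' := by
  obtain ⟨hcard, hbe, h⟩ := hC
  obtain ⟨_, hbe', h'⟩ := hC'
  constructor
  · refine ⟨hcard, le_trans hb hbe, ?_⟩
    intro u hu v hv huv τ hτ1 hτ2
    by_cases hcase : τ + Δ ≤ e
    · obtain ⟨t, ht1, ht2, ht3⟩ := h' u hu v hv huv τ hτ1
        (le_max_of_le_left (by linarith))
      exact ⟨t, ht1, le_min (le_trans ht2 (min_le_left _ _))
        (le_trans (le_trans ht2 (min_le_left _ _)) hcase), ht3⟩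
    · push_neg at hcase
      have hτb' : τ ≤ b' := by
        rcases le_max_iff.mp hτ2 with h1 | h1
        · linarith
        · exact h1
      obtain ⟨t, ht1, ht2, ht3⟩ := h u hu v hv huv b le_rfl (le_max_right _ _)
      refine ⟨t, by linarith, le_min ?_ (le_trans ht2 (min_le_right _ _)), ht3⟩
      have := le_trans ht2 (min_le_right _ _)
      linarith
  · refine ⟨hcard, le_trans hbe he, ?_⟩
    intro u hu v hv huv τ hτ1 hτ2
    by_cases hcase : τ + Δ ≤ e'
    · have : τ ≤ max (e' - Δ) b' := le_max_of_le_left (by linarith)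
      exact h' u hu v hv huv τ (le_trans hb hτ1) this
    · push_neg at hcase
      have hτb : τ ≤ b := by
        rcases le_max_iff.mp hτ2 with h1 | h1
        · linarith
        · exact h1
      obtain ⟨t, ht1, ht2, ht3⟩ := h u hu v hv huv (max (e - Δ) b)
        (le_max_right _ _) le_rfl
      have h2 := le_trans ht2 (min_le_right _ _)
      refine ⟨t, le_trans hτb (le_trans (le_max_right _ _) ht1),
        le_min (by linarith) (by linarith), ht3⟩
end

section
/- Let (V,E) be a link stream, Δ > 0, and let (X,[b,e]) be a maximal Δ-clique. Let s be the earliest occurrence time of a link in (X,[b,e]); that is, s ∈ [b,e], there exist distinct u, v ∈ X with (s,u,v) ∈ E, and there is no t ∈ [b, s) and distinct u, v ∈ X with (t,u,v) ∈ E. Then e ≥ s + Δ. -/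
/-- if `(X, [b, e])` is a maximal `Δ`-clique and `s` is the earliest
occurrence time of a link in it, then `e ≥ s + Δ`. -/
theorem max_clique_width {α : Type*} [Fintype α] [DecidableEq α]
    (E : Finset (ℝ × α × α)) (Δ : ℝ) (hΔ : 0 < Δ)
    (hsym : ∀ t u v, (t, u, v) ∈ E → (t, v, u) ∈ E)
    (hloop : ∀ t v, (t, v, v) ∉ E)
    (X : Finset α) (b e : ℝ) (hmax : IsMaxDeltaClique E Δ X b e)
    (s : ℝ) (hs₁ : b ≤ s) (hs₂ : s ≤ e)
    (hs₃ : ∃ u ∈ X, ∃ v ∈ X, u ≠ v ∧ (s, u, v) ∈ E)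
    (hs₄ : ∀ t : ℝ, b ≤ t → t < s →
      ∀ u ∈ X, ∀ v ∈ X, u ≠ v → (t, u, v) ∉ E) :
    s + Δ ≤ e := by
  by_contra h
  push_neg at h
  obtain ⟨⟨hcard, hbe, hcl⟩, hm⟩ := hmax
  have hclique : IsDeltaClique E Δ X b (s + Δ) := by
    refine ⟨hcard, by linarith, ?_⟩
    intro u hu v hv huv τ hτ1 hτ2
    have hmaxeq : max (s + Δ - Δ) b = s := by
      rw [show s + Δ - Δ = s by ring, max_eq_left hs₁]
    rw [hmaxeq] at hτ2
    by_cases hc : τ ≤ max (e - Δ) b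
    · obtain ⟨t, ht1, ht2, ht3⟩ := hcl u hu v hv huv τ hτ1 hc
      have hte : t ≤ e := ht2.trans (min_le_right _ _)
      have htτ : t ≤ τ + Δ := ht2.trans (min_le_left _ _)
      exact ⟨t, ht1, le_min htτ (by linarith), ht3⟩
    · push_neg at hc
      have hτ₀b : b ≤ max (e - Δ) b := le_max_right _ _
      obtain ⟨t, ht1, ht2, ht3⟩ := hcl u hu v hv huv _ hτ₀b le_rfl
      have hte : t ≤ e := ht2.trans (min_le_right _ _)
      have hst : s ≤ t := by
        by_contra hst
        push_neg at hst
        exact hs₄ t (hτ₀b.trans ht1) hst u hu v hv huv ht3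
      have heΔ : e - Δ ≤ max (e - Δ) b := le_max_left _ _
      exact ⟨t, le_trans hτ2 hst, le_min (by linarith) (by linarith), ht3⟩
  obtain ⟨_, _, he⟩ := hm X b (s + Δ) hclique (subset_refl X) le_rfl h.le
  linarith
end

section
/- Let (V,E) be a link stream, Δ > 0, and let (X,[b,e]) be a maximal Δ-clique. Then e − b ≥ Δ, i.e., the time interval of any maximal Δ-clique has duration at least Δ. -/
/-- the time interval of any maximal `Δ`-clique has duration at least `Δ`. -/
theorem max_clique_duration {α : Type*} [Fintype α] [DecidableEq α]
    (E : Finset (ℝ × α × α)) (Δ : ℝ) (hΔ : 0 < Δ)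
    (hsym : ∀ t u v, (t, u, v) ∈ E → (t, v, u) ∈ E)
    (hloop : ∀ t v, (t, v, v) ∉ E)
    (X : Finset α) (b e : ℝ) (hmax : IsMaxDeltaClique E Δ X b e) :
    Δ ≤ e - b := by
  by_contra hlt
  push_neg at hlt
  obtain ⟨⟨hcard, hbe, hcl⟩, hmaxi⟩ := hmax
  have hb' : e - Δ < b := by linarith
  have hclique : IsDeltaClique E Δ X (e - Δ) e := by
    refine ⟨hcard, by linarith, ?_⟩
    intro u hu v hv huv τ hτ1 hτ2
    have hτmax : max (e - Δ) (e - Δ) = e - Δ := max_self _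
    rw [hτmax] at hτ2
    have hτ : τ = e - Δ := le_antisymm hτ2 hτ1
    obtain ⟨t, ht1, ht2, ht3⟩ := hcl u hu v hv huv b le_rfl (le_max_right _ _)
    refine ⟨t, ?_, ?_, ht3⟩
    · linarith
    · have := min_le_right (b + Δ) e
      have h2 : t ≤ e := le_trans ht2 (min_le_right _ _)
      subst hτ
      simp only [sub_add_cancel, min_self]
      exact h2
  obtain ⟨_, hb, _⟩ := hmaxi X (e - Δ) e hclique (subset_refl X) (le_of_lt hb') le_rfl
  linarith
end

section
/- Let (V,E) be a link stream, Δ > 0, and let (X,[b,e]) be a maximal Δ-clique. Then there exist distinct u, v ∈ X such that (b+Δ, u, v) ∈ E and there is no t ∈ [b, b+Δ) with (t,u,v) ∈ E. (The latest first occurrence time, over pairs of X, of a link in [b,e] is exactly b + Δ.) -/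
/-- in a maximal `Δ`-clique `(X, [b, e])`, some pair of distinct nodes
of `X` has a link at time `b + Δ` and no link at any time in `[b, b + Δ)`. -/
theorem max_clique_latest_first_occurrence {α : Type*} [Fintype α] [DecidableEq α]
    (E : Finset (ℝ × α × α)) (Δ : ℝ) (hΔ : 0 < Δ)
    (hsym : ∀ t u v, (t, u, v) ∈ E → (t, v, u) ∈ E)
    (hloop : ∀ t v, (t, v, v) ∉ E)
    (X : Finset α) (b e : ℝ) (hmax : IsMaxDeltaClique E Δ X b e) :
    ∃ u ∈ X, ∃ v ∈ X, u ≠ v ∧ (b + Δ, u, v) ∈ E ∧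
      ∀ t : ℝ, b ≤ t → t < b + Δ → (t, u, v) ∉ E := by
  classical
  obtain ⟨⟨hcard, hbe, hcl⟩, hM⟩ := hmax
  have hPne : X.offDiag.Nonempty := by
    obtain ⟨u, hu, v, hv, huv⟩ := Finset.one_lt_card.mp (by omega : 1 < X.card)
    exact ⟨(u, v), Finset.mem_offDiag.mpr ⟨hu, hv, huv⟩⟩
  set T : α × α → Finset ℝ := fun p =>
    (E.filter (fun x => b ≤ x.1 ∧ x.1 ≤ min (b + Δ) e ∧ x.2 = p)).image Prod.fst with hTdef
  have hT : ∀ p : α × α, ∀ t : ℝ,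
      t ∈ T p ↔ ((t, p.1, p.2) ∈ E ∧ b ≤ t ∧ t ≤ min (b + Δ) e) := by
    intro p t
    constructor
    · intro ht
      simp only [hTdef, Finset.mem_image, Finset.mem_filter] at ht
      obtain ⟨⟨t', q⟩, ⟨hxE, h1, h2, h3⟩, h4⟩ := ht
      simp only at h1 h2 h3 h4
      subst h3; subst h4
      exact ⟨hxE, h1, h2⟩
    · intro ⟨h1, h2, h3⟩
      simp only [hTdef, Finset.mem_image, Finset.mem_filter]
      exact ⟨(t, p.1, p.2), ⟨h1, h2, h3, rfl⟩, rfl⟩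
  have hTne : ∀ p ∈ X.offDiag, (T p).Nonempty := by
    intro p hp
    rw [Finset.mem_offDiag] at hp
    obtain ⟨t, ht1, ht2, ht3⟩ := hcl p.1 hp.1 p.2 hp.2.1 hp.2.2 b le_rfl (le_max_right _ _)
    exact ⟨t, (hT p t).mpr ⟨ht3, ht1, by simpa using ht2⟩⟩
  set f : α × α → ℝ := fun p => if h : (T p).Nonempty then (T p).min' h else b with hfdef
  have hfmem : ∀ p ∈ X.offDiag, f p ∈ T p := by
    intro p hp
    simp only [hfdef, dif_pos (hTne p hp)]
    exact (T p).min'_mem _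
  have hfle : ∀ p ∈ X.offDiag, ∀ t ∈ T p, f p ≤ t := by
    intro p hp t ht
    simp only [hfdef, dif_pos (hTne p hp)]
    exact (T p).min'_le t ht
  set m : ℝ := X.offDiag.sup' hPne f with hmdef
  have hm_le : m ≤ b + Δ := by
    apply Finset.sup'_le
    intro p hp
    have := ((hT p (f p)).mp (hfmem p hp)).2.2
    exact le_trans this (min_le_left _ _)
  have hm_le_e : m ≤ e := by
    apply Finset.sup'_le
    intro p hp
    have := ((hT p (f p)).mp (hfmem p hp)).2.2
    exact le_trans this (min_le_right _ _)
  have hb_m : b ≤ m := by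
    obtain ⟨p, hp⟩ := hPne
    exact le_trans ((hT p (f p)).mp (hfmem p hp)).2.1 (Finset.le_sup' f hp)
  -- m = b + Δ, else extend the interval leftwards
  have hm_eq : m = b + Δ := by
    by_contra hne
    have hmlt : m < b + Δ := lt_of_le_of_ne hm_le hne
    have hb' : m - Δ < b := by linarith
    have hclique : IsDeltaClique E Δ X (m - Δ) e := by
      refine ⟨hcard, by linarith, ?_⟩
      intro u hu v hv huv τ hτ1 hτ2
      by_cases hτb : b ≤ τ
      · have hτ2' : τ ≤ max (e - Δ) b := by
          rcases le_max_iff.mp hτ2 with h | h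
          · exact le_max_of_le_left h
          · linarith
        obtain ⟨t, ht1, ht2, ht3⟩ := hcl u hu v hv huv τ hτb hτ2'
        exact ⟨t, ht1, ht2, ht3⟩
      · push_neg at hτb
        have hp : (u, v) ∈ X.offDiag := Finset.mem_offDiag.mpr ⟨hu, hv, huv⟩
        obtain ⟨hE, hb1, hb2⟩ := (hT (u, v) (f (u, v))).mp (hfmem _ hp)
        refine ⟨f (u, v), by linarith, ?_, hE⟩
        have hfm : f (u, v) ≤ m := Finset.le_sup' f hp
        exact le_min (by linarith) (le_trans hb2 (min_le_right _ _))
    have := (hM X (m - Δ) e hclique (le_refl X) (by linarith) le_rfl).2.1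
    linarith
  -- the pair attaining the sup
  obtain ⟨p, hp, hpf⟩ := Finset.exists_mem_eq_sup' hPne f
  rw [Finset.mem_offDiag] at hp
  refine ⟨p.1, hp.1, p.2, hp.2.1, hp.2.2, ?_, ?_⟩
  · have := ((hT p (f p)).mp (hfmem p (Finset.mem_offDiag.mpr hp))).1
    rwa [← hpf, ← hmdef, hm_eq] at this
  · intro t ht1 ht2 htE
    have htT : t ∈ T p := (hT p t).mpr ⟨htE, ht1, le_min (le_of_lt ht2) (by linarith)⟩
    have := hfle p (Finset.mem_offDiag.mpr hp) t htT
    rw [← hpf, ← hmdef, hm_eq] at this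
    linarith
end

section
/- Let (V,E) be a link stream, Δ > 0, and let (X,[b,e]) be a maximal Δ-clique. Then there exist distinct u, v ∈ X such that (e−Δ, u, v) ∈ E and there is no t ∈ (e−Δ, e] with (t,u,v) ∈ E. (The earliest last occurrence time, over pairs of X, of a link in [b,e] is exactly e − Δ.) -/
/-- in a maximal `Δ`-clique `(X, [b, e])`, some pair of distinct nodes
of `X` has a link at time `e - Δ` and no link at any time in `(e - Δ, e]`. -/
theorem max_clique_earliest_last_occurrence {α : Type*} [Fintype α] [DecidableEq α]
    (E : Finset (ℝ × α × α)) (Δ : ℝ) (hΔ : 0 < Δ)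
    (hsym : ∀ t u v, (t, u, v) ∈ E → (t, v, u) ∈ E)
    (hloop : ∀ t v, (t, v, v) ∉ E)
    (X : Finset α) (b e : ℝ) (hmax : IsMaxDeltaClique E Δ X b e) :
    ∃ u ∈ X, ∃ v ∈ X, u ≠ v ∧ (e - Δ, u, v) ∈ E ∧
      ∀ t : ℝ, e - Δ < t → t ≤ e → (t, u, v) ∉ E := by
  classical
  obtain ⟨⟨hcard, hbe, hcl⟩, hm⟩ := hmax
  set P : Finset (α × α) := (X ×ˢ X).filter (fun p => p.1 ≠ p.2) with hP
  have hPmem : ∀ p : α × α, p ∈ P ↔ p.1 ∈ X ∧ p.2 ∈ X ∧ p.1 ≠ p.2 := by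
    intro p; simp [hP, Finset.mem_filter, Finset.mem_product, and_assoc]
  have hPne : P.Nonempty := by
    obtain ⟨u, hu, v, hv, huv⟩ := Finset.one_lt_card.mp hcard
    exact ⟨(u, v), (hPmem (u, v)).mpr ⟨hu, hv, huv⟩⟩
  set T : α × α → Finset ℝ :=
    fun p => (E.filter (fun q => q.2 = p ∧ max (e - Δ) b ≤ q.1 ∧ q.1 ≤ e)).image Prod.fst
    with hT
  have hTmem : ∀ p t, t ∈ T p ↔ (t, p.1, p.2) ∈ E ∧ max (e - Δ) b ≤ t ∧ t ≤ e := by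
    intro p t
    simp only [hT, Finset.mem_image, Finset.mem_filter]
    constructor
    · rintro ⟨q, ⟨hq, hq2, h1, h2⟩, rfl⟩
      rw [show q = (q.1, p.1, p.2) from by rw [← hq2]] at hq
      exact ⟨hq, h1, h2⟩
    · rintro ⟨h, h1, h2⟩
      exact ⟨(t, p.1, p.2), ⟨h, rfl, h1, h2⟩, rfl⟩
  have hTne : ∀ p ∈ P, (T p).Nonempty := by
    intro p hp
    obtain ⟨hu, hv, huv⟩ := (hPmem p).mp hp
    obtain ⟨t, ht1, ht2, ht3⟩ := hcl p.1 hu p.2 hv huv (max (e - Δ) b) (le_max_right _ _) le_rfl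
    exact ⟨t, (hTmem p t).mpr ⟨ht3, ht1, le_trans ht2 (min_le_right _ _)⟩⟩
  set f : α × α → ℝ := fun p => (insert (e - Δ) (T p)).max' (Finset.insert_nonempty _ _) with hf
  have hfmem : ∀ p, f p ∈ insert (e - Δ) (T p) := fun p => Finset.max'_mem _ _
  have hfge : ∀ p, ∀ t ∈ T p, t ≤ f p :=
    fun p t ht => Finset.le_max' _ _ (Finset.mem_insert_of_mem ht)
  have hfgeΔ : ∀ p, e - Δ ≤ f p := fun p => Finset.le_max' _ _ (Finset.mem_insert_self _ _)
  have hfle : ∀ p ∈ P, f p ≤ e := by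
    intro p hp
    rcases Finset.mem_insert.mp (hfmem p) with h | h
    · rw [h]; linarith
    · exact ((hTmem p _).mp h).2.2
  set m := P.inf' hPne f with hmdef
  obtain ⟨p₀, hp₀, hfp₀⟩ := Finset.exists_mem_eq_inf' hPne f
  have hmf : m = f p₀ := hfp₀
  have hmle : ∀ p ∈ P, m ≤ f p := fun p hp => Finset.inf'_le f hp
  have hmgeΔ : e - Δ ≤ m := by rw [hmf]; exact hfgeΔ p₀
  by_cases hcase : e - Δ < m
  · exfalso
    have hme : m ≤ e := hmf ▸ hfle p₀ hp₀
    have hclique : IsDeltaClique E Δ X b (m + Δ) := by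
      refine ⟨hcard, by linarith, ?_⟩
      intro u hu v hv huv τ hτ1 hτ2
      have hpP : (u, v) ∈ P := (hPmem (u, v)).mpr ⟨hu, hv, huv⟩
      by_cases hτ : τ ≤ max (e - Δ) b
      · obtain ⟨t, ht1, ht2, ht3⟩ := hcl u hu v hv huv τ hτ1 hτ
        have h1 := le_trans ht2 (min_le_left _ _)
        have h2 := le_trans ht2 (min_le_right _ _)
        exact ⟨t, ht1, le_min h1 (by linarith), ht3⟩
      · push_neg at hτ
        have hτb : b < τ := lt_of_le_of_lt (le_max_right _ _) hτ
        have hτeΔ : e - Δ < τ := lt_of_le_of_lt (le_max_left _ _) hτ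
        have hτm : τ ≤ m := by
          rw [show m + Δ - Δ = m from by ring] at hτ2
          rcases le_max_iff.mp hτ2 with h | h
          · exact h
          · linarith
        have hfT : f (u, v) ∈ T (u, v) := by
          rcases Finset.mem_insert.mp (hfmem (u, v)) with h | h
          · exfalso; have := hmle (u, v) hpP; rw [h] at this; linarith
          · exact h
        obtain ⟨hE, hge, hle'⟩ := (hTmem (u, v) _).mp hfT
        exact ⟨f (u, v), le_trans hτm (hmle _ hpP),
          le_min (by linarith) (by linarith), hE⟩
    obtain ⟨_, _, he⟩ := hm X b (m + Δ) hclique Finset.Subset.rfl le_rfl (by linarith)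
    linarith
  · push_neg at hcase
    have hmeq : m = e - Δ := le_antisymm hcase hmgeΔ
    obtain ⟨hu, hv, huv⟩ := (hPmem p₀).mp hp₀
    obtain ⟨t₀, ht₀⟩ := hTne p₀ hp₀
    obtain ⟨ht₀E, ht₀1, ht₀2⟩ := (hTmem p₀ t₀).mp ht₀
    have ht₀f : t₀ ≤ f p₀ := hfge p₀ t₀ ht₀
    have hfe : f p₀ = e - Δ := by rw [← hmf, hmeq]
    have ht₀eq : t₀ = e - Δ := le_antisymm (hfe ▸ ht₀f)
      (le_trans (le_max_left _ _) ht₀1)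
    have hbeΔ : b ≤ e - Δ := by
      have := le_trans (le_max_right (e - Δ) b) ht₀1
      linarith [ht₀eq ▸ this]
    refine ⟨p₀.1, hu, p₀.2, hv, huv, ht₀eq ▸ ht₀E, ?_⟩
    intro t ht1 ht2 htE
    have htT : t ∈ T p₀ := (hTmem p₀ t).mpr
      ⟨htE, max_le ht1.le (le_trans hbeΔ ht1.le), ht2⟩
    have := hfge p₀ t htT
    rw [hfe] at this
    linarith
end

section
/- Let (V,E) be a link stream, Δ > 0, let (X,[b,e]) be a maximal Δ-clique, and let s be the earliest occurrence time of a link in (X,[b,e]) (i.e., s ∈ [b,e], some link of E between two distinct nodes of X occurs at time s, and no link of E between two nodes of X occurs at a time in [b, s)). Then for every subset Y ⊆ X with |Y| ≥ 2, the pair (Y, [s, s+Δ]) is a Δ-clique. -/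
/-- if `(X, [b, e])` is a maximal `Δ`-clique and `s` is the earliest
occurrence time of a link in it, then `(Y, [s, s + Δ])` is a `Δ`-clique for every
`Y ⊆ X` with `|Y| ≥ 2`. -/
theorem subsets_clique_at_earliest {α : Type*} [Fintype α] [DecidableEq α]
    (E : Finset (ℝ × α × α)) (Δ : ℝ) (hΔ : 0 < Δ)
    (hsym : ∀ t u v, (t, u, v) ∈ E → (t, v, u) ∈ E)
    (hloop : ∀ t v, (t, v, v) ∉ E)
    (X : Finset α) (b e : ℝ) (hmax : IsMaxDeltaClique E Δ X b e)
    (s : ℝ) (hs₁ : b ≤ s) (hs₂ : s ≤ e)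
    (hs₃ : ∃ u ∈ X, ∃ v ∈ X, u ≠ v ∧ (s, u, v) ∈ E)
    (hs₄ : ∀ t : ℝ, b ≤ t → t < s →
      ∀ u ∈ X, ∀ v ∈ X, u ≠ v → (t, u, v) ∉ E) :
    ∀ Y : Finset α, Y ⊆ X → 2 ≤ Y.card →
      IsDeltaClique E Δ Y s (s + Δ) := by
  intro Y hYX hYcard
  obtain ⟨⟨_, hbe, hcl⟩, _⟩ := hmax
  refine ⟨hYcard, by linarith, ?_⟩
  intro u hu v hv huv τ hτ₁ hτ₂
  have hτs : τ = s := le_antisymm (by simpa using hτ₂) hτ₁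
  subst hτs
  by_cases hcase : τ ≤ max (e - Δ) b
  · obtain ⟨t, ht₁, ht₂, ht₃⟩ := hcl u (hYX hu) v (hYX hv) huv τ hs₁ hcase
    exact ⟨t, ht₁, by have := le_trans ht₂ (min_le_left _ _); simp only [min_self]; linarith, ht₃⟩
  · push_neg at hcase
    set τ' := max (e - Δ) b with hτ'
    obtain ⟨t, ht₁, ht₂, ht₃⟩ := hcl u (hYX hu) v (hYX hv) huv τ' (le_max_right _ _) le_rfl
    have hts : τ ≤ t := by
      by_contra h
      push_neg at h
      exact hs₄ t (le_trans (le_max_right _ _) ht₁) h u (hYX hu) v (hYX hv) huv ht₃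
    have hte : t ≤ e := le_trans ht₂ (min_le_right _ _)
    have heΔ : e - Δ < τ := lt_of_le_of_lt (le_max_left _ _) hcase
    exact ⟨t, hts, le_min (by linarith) (by linarith), ht₃⟩
end

section
/- Let (V,E) be a link stream, Δ > 0, and suppose (X,[b,e]) and (X,[b,e']) are both Δ-cliques with e < e', and that no link of E between two nodes of X occurs at a time in (e, e']. Then for all distinct u, v ∈ X there exists t with e' − Δ ≤ t ≤ e and (t,u,v) ∈ E. (In particular the earliest last occurrence time, over pairs of X, of a link in [b,e] is at least e' − Δ > e − Δ.) -/
/-- if `(X, [b, e])` and `(X, [b, e'])` are `Δ`-cliques with `e < e'`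
and no link between nodes of `X` occurs at a time in `(e, e']`, then every pair of
distinct nodes of `X` has a link at some time `t` with `e' - Δ ≤ t ≤ e`. -/
theorem last_occurrence_bound {α : Type*} [Fintype α] [DecidableEq α]
    (E : Finset (ℝ × α × α)) (Δ : ℝ) (hΔ : 0 < Δ)
    (hsym : ∀ t u v, (t, u, v) ∈ E → (t, v, u) ∈ E)
    (hloop : ∀ t v, (t, v, v) ∉ E)
    (X : Finset α) (b e e' : ℝ)
    (hC : IsDeltaClique E Δ X b e) (hC' : IsDeltaClique E Δ X b e')
    (hee' : e < e')
    (hno : ∀ t : ℝ, e < t → t ≤ e' → ∀ u ∈ X, ∀ v ∈ X, (t, u, v) ∉ E) :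
    ∀ u ∈ X, ∀ v ∈ X, u ≠ v →
      ∃ t : ℝ, e' - Δ ≤ t ∧ t ≤ e ∧ (t, u, v) ∈ E := by
  intro u hu v hv huv
  obtain ⟨_, hbe', h⟩ := hC'
  obtain ⟨t, ht1, ht2, ht3⟩ := h u hu v hv huv (max (e' - Δ) b) (le_max_right _ _) le_rfl
  have hte' : t ≤ e' := le_trans ht2 (min_le_right _ _)
  have hte : t ≤ e := by
    by_contra hc
    exact hno t (lt_of_not_ge hc) hte' u hu v hv ht3
  exact ⟨t, le_trans (le_max_left _ _) ht1, hte, ht3⟩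
end

section
/- Let (V,E) be a link stream and Δ > 0. A Δ-clique (X,[b,e]) is maximal if and only if the following three conditions hold: (i) there is no node v ∈ V \ X such that (X ∪ {v}, [b,e]) is a Δ-clique; (ii) there is no b' < b such that (X,[b',e]) is a Δ-clique; (iii) there is no e' > e such that (X,[b,e']) is a Δ-clique. -/
/-- a `Δ`-clique `(X, [b, e])` is maximal iff (i) no node `v ∉ X`
yields a `Δ`-clique `(X ∪ {v}, [b, e])`, (ii) no `b' < b` yields a `Δ`-clique
`(X, [b', e])`, and (iii) no `e' > e` yields a `Δ`-clique `(X, [b, e'])`. -/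
theorem maximality_characterization {α : Type*} [Fintype α] [DecidableEq α]
    (E : Finset (ℝ × α × α)) (Δ : ℝ) (hΔ : 0 < Δ)
    (hsym : ∀ t u v, (t, u, v) ∈ E → (t, v, u) ∈ E)
    (hloop : ∀ t v, (t, v, v) ∉ E)
    (X : Finset α) (b e : ℝ) (hC : IsDeltaClique E Δ X b e) :
    IsMaxDeltaClique E Δ X b e ↔
      ((∀ v : α, v ∉ X → ¬ IsDeltaClique E Δ (insert v X) b e) ∧
       (∀ b' : ℝ, b' < b → ¬ IsDeltaClique E Δ X b' e) ∧
       (∀ e' : ℝ, e < e' → ¬ IsDeltaClique E Δ X b e')) := by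
  constructor
  · rintro ⟨_, hmax⟩
    refine ⟨?_, ?_, ?_⟩
    · intro v hv hcl
      obtain ⟨h1, _, _⟩ := hmax (insert v X) b e hcl (Finset.subset_insert v X) le_rfl le_rfl
      exact hv (h1 ▸ Finset.mem_insert_self v X)
    · intro b' hb' hcl
      obtain ⟨_, hh, _⟩ := hmax X b' e hcl (subset_refl X) hb'.le le_rfl
      exact absurd hh hb'.ne
    · intro e' he' hcl
      obtain ⟨_, _, hh⟩ := hmax X b e' hcl (subset_refl X) le_rfl he'.le
      exact absurd hh he'.ne'
  · rintro ⟨h1, h2, h3⟩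
    refine ⟨hC, ?_⟩
    intro X' b' e' hC' hX hb he
    have hee : e' = e := by
      by_contra h
      have hlt : e < e' := lt_of_le_of_ne he (Ne.symm h)
      apply h3 e' hlt
      refine ⟨hC.1, hC.2.1.trans hlt.le, fun u hu v hv huv τ hτb hτm => ?_⟩
      by_cases hτ : τ ≤ max (e - Δ) b
      · obtain ⟨t, ht1, ht2, ht3⟩ := hC.2.2 u hu v hv huv τ hτb hτ
        exact ⟨t, ht1, ht2.trans (min_le_min le_rfl hlt.le), ht3⟩
      · push_neg at hτ
        have hbτ : b < τ := (le_max_right _ _).trans_lt hτ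
        have hτe' : τ ≤ e' - Δ := by
          rcases le_max_iff.mp hτm with h' | h'
          · exact h'
          · exact absurd h' (not_le.mpr hbτ)
        exact hC'.2.2 u (hX hu) v (hX hv) huv τ (hb.trans hbτ.le)
          (le_max_iff.mpr (Or.inl hτe'))
    subst hee
    have hbb : b' = b := by
      by_contra h
      have hlt : b' < b := lt_of_le_of_ne hb h
      apply h2 b' hlt
      exact ⟨hC.1, hb.trans hC.2.1, fun u hu v hv huv τ hτb hτm =>
        hC'.2.2 u (hX hu) v (hX hv) huv τ hτb hτm⟩
    subst hbb
    have hXX : X' = X := by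
      by_contra h
      obtain ⟨v, hv1, hv2⟩ := Finset.exists_of_ssubset (hX.ssubset_of_ne (fun h' => h h'.symm))
      apply h1 v hv2
      refine ⟨hC.1.trans (Finset.card_le_card (Finset.subset_insert v X)), hC.2.1, ?_⟩
      intro u hu w hw huw τ hτb hτm
      have hu' : u ∈ X' := by
        rcases Finset.mem_insert.mp hu with h' | h'
        · exact h' ▸ hv1
        · exact hX h'
      have hw' : w ∈ X' := by
        rcases Finset.mem_insert.mp hw with h' | h'
        · exact h' ▸ hv1
        · exact hX h'
      exact hC'.2.2 u hu' w hw' huw τ hτb hτm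
    exact ⟨hXX, rfl, rfl⟩
end

section
/- Let (V,E) be a link stream and Δ > 0. Every Δ-clique (X,[b,e]) of (V,E) is contained in some maximal Δ-clique (X',[b',e']), i.e., there exists a maximal Δ-clique with X ⊆ X' and [b,e] ⊆ [b',e']. -/
section Aux

variable {α : Type*}

/-- every clique has a link-time near its right end -/
lemma dc_time_high (E : Finset (ℝ × α × α)) {Δ : ℝ} {X : Finset α} {b e : ℝ}
    (hC : IsDeltaClique E Δ X b e) :
    ∃ t ∈ E.image Prod.fst, e - Δ ≤ t ∧ t ≤ e := by
  obtain ⟨hcard, hbe, h⟩ := hC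
  obtain ⟨u, hu, v, hv, huv⟩ := Finset.one_lt_card.mp hcard
  obtain ⟨t, ht1, ht2, ht3⟩ := h u hu v hv huv (max (e - Δ) b) (le_max_right _ _) le_rfl
  exact ⟨t, Finset.mem_image.mpr ⟨(t, u, v), ht3, rfl⟩,
    le_trans (le_max_left _ _) ht1, le_trans ht2 (min_le_right _ _)⟩

/-- every clique has a link-time near its left end -/
lemma dc_time_low (E : Finset (ℝ × α × α)) {Δ : ℝ} {X : Finset α} {b e : ℝ}
    (hC : IsDeltaClique E Δ X b e) :
    ∃ t ∈ E.image Prod.fst, b ≤ t ∧ t ≤ b + Δ := by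
  obtain ⟨hcard, hbe, h⟩ := hC
  obtain ⟨u, hu, v, hv, huv⟩ := Finset.one_lt_card.mp hcard
  obtain ⟨t, ht1, ht2, ht3⟩ := h u hu v hv huv b le_rfl (le_max_right _ _)
  exact ⟨t, Finset.mem_image.mpr ⟨(t, u, v), ht3, rfl⟩, ht1,
    le_trans ht2 (min_le_left _ _)⟩

/-- the supremum of valid right endpoints is attained, and lies in times(E) + Δ. -/
lemma dc_sup_attain (E : Finset (ℝ × α × α)) {Δ : ℝ} (hΔ : 0 < Δ) {X : Finset α} {b e0 : ℝ}
    [DecidableEq α] (hC : IsDeltaClique E Δ X b e0) :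
    ∃ s : ℝ, e0 ≤ s ∧ IsDeltaClique E Δ X b s ∧ s - Δ ∈ E.image Prod.fst ∧
      ∀ e', e0 ≤ e' → IsDeltaClique E Δ X b e' → e' ≤ s := by
  classical
  set T : Finset ℝ := E.image Prod.fst with hT
  obtain ⟨t0, ht0T, _, _⟩ := dc_time_high E hC
  have hTne : T.Nonempty := ⟨t0, ht0T⟩
  set V : Set ℝ := {e' | e0 ≤ e' ∧ IsDeltaClique E Δ X b e'} with hV
  have hVne : e0 ∈ V := ⟨le_rfl, hC⟩
  have hVbdd : BddAbove V := by
    refine ⟨T.max' hTne + Δ, fun e' he' => ?_⟩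
    obtain ⟨t, htT, h1, h2⟩ := dc_time_high E he'.2
    have := Finset.le_max' T t htT
    linarith
  set s := sSup V with hs
  have hmem : ∀ e' ∈ V, e' ≤ s := fun _ h => le_csSup hVbdd h
  have hs0 : e0 ≤ s := hmem e0 hVne
  -- s is a valid right endpoint
  have hCs : IsDeltaClique E Δ X b s := by
    refine ⟨hC.1, le_trans hC.2.1 hs0, ?_⟩
    intro u hu v hv huv τ hτ1 hτ2
    by_cases hcase : ∃ e1 ∈ V, τ ≤ max (e1 - Δ) b
    · obtain ⟨e1, he1, hτe1⟩ := hcase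
      obtain ⟨t, ht1, ht2, ht3⟩ := he1.2.2.2 u hu v hv huv τ hτ1 hτe1
      exact ⟨t, ht1, le_trans ht2 (min_le_min le_rfl (hmem e1 he1)), ht3⟩
    · push_neg at hcase
      have hbτ : b < τ := lt_of_le_of_lt (le_max_right (e0 - Δ) b) (hcase e0 hVne)
      have hsτ : s ≤ τ + Δ := by
        refine csSup_le ⟨e0, hVne⟩ (fun e1 he1 => ?_)
        have := lt_of_le_of_lt (le_max_left (e1 - Δ) b) (hcase e1 he1)
        linarith
      have hA : ∃ e1 ∈ V, ∀ x ∈ T.filter (· < τ), x + Δ < e1 := by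
        by_cases hAne : (T.filter (· < τ)).Nonempty
        · have hc : (T.filter (· < τ)).max' hAne < τ :=
            (Finset.mem_filter.mp ((T.filter (· < τ)).max'_mem hAne)).2
          have hlt : (T.filter (· < τ)).max' hAne + Δ < s := by
            have : τ ≤ s - Δ := by
              rcases le_max_iff.mp hτ2 with h | h
              · exact h
              · linarith
            linarith
          obtain ⟨e1, he1, hlt1⟩ := exists_lt_of_lt_csSup ⟨e0, hVne⟩ hlt
          refine ⟨e1, he1, fun x hx => lt_of_le_of_lt ?_ hlt1⟩
          have := Finset.le_max' _ x hx
          linarith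
        · exact ⟨e0, hVne, fun x hx => absurd ⟨x, hx⟩ hAne⟩
      obtain ⟨e1, he1V, he1A⟩ := hA
      obtain ⟨t, ht1, ht2, ht3⟩ :=
        he1V.2.2.2 u hu v hv huv (max (e1 - Δ) b) (le_max_right _ _) le_rfl
      have hte1 : t ≤ e1 := le_trans ht2 (min_le_right _ _)
      have he1s : e1 ≤ s := hmem e1 he1V
      refine ⟨t, ?_, le_min (by linarith) (by linarith), ht3⟩
      by_contra hlt
      push_neg at hlt
      have htA : t ∈ T.filter (· < τ) :=
        Finset.mem_filter.mpr ⟨Finset.mem_image.mpr ⟨(t, u, v), ht3, rfl⟩, hlt⟩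
      have h1 := he1A t htA
      have h2 : e1 - Δ ≤ max (e1 - Δ) b := le_max_left _ _
      linarith
  -- s ≥ b + Δ
  have hbΔs : b + Δ ≤ s := by
    have hC' : IsDeltaClique E Δ X b (max e0 (b + Δ)) := by
      refine ⟨hC.1, le_trans hC.2.1 (le_max_left _ _), ?_⟩
      intro u hu v hv huv τ hτ1 hτ2
      have hτ2' : τ ≤ max (e0 - Δ) b := by
        have hmx : max e0 (b + Δ) - Δ ≤ max (e0 - Δ) b := by
          have h1 := le_max_left (e0 - Δ) b
          have h2 := le_max_right (e0 - Δ) b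
          have : max e0 (b + Δ) ≤ max (e0 - Δ) b + Δ := max_le (by linarith) (by linarith)
          linarith
        rcases le_max_iff.mp hτ2 with h | h
        · exact le_trans h hmx
        · exact le_max_of_le_right h
      obtain ⟨t, ht1, ht2, ht3⟩ := hC.2.2 u hu v hv huv τ hτ1 hτ2'
      exact ⟨t, ht1, le_trans ht2 (min_le_min le_rfl (le_max_left _ _)), ht3⟩
    have := hmem _ ⟨le_max_left e0 (b + Δ), hC'⟩
    have := le_max_right e0 (b + Δ)
    linarith
  refine ⟨s, hs0, hCs, ?_, fun e' h1 h2 => hmem e' ⟨h1, h2⟩⟩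
  -- membership of s - Δ in T
  by_contra hsT
  have hoff : ∀ p ∈ X.offDiag, ∃ t, (s - Δ < t ∧ t ≤ s) ∧ (t, p.1, p.2) ∈ E := by
    intro p hp
    obtain ⟨hp1, hp2, hp12⟩ := Finset.mem_offDiag.mp hp
    obtain ⟨t, ht1, ht2, ht3⟩ :=
      hCs.2.2 p.1 hp1 p.2 hp2 hp12 (s - Δ) (by linarith) (le_max_left _ _)
    refine ⟨t, ⟨?_, le_trans ht2 (min_le_right _ _)⟩, ht3⟩
    rcases eq_or_lt_of_le ht1 with h | h
    · exfalso
      apply hsT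
      rw [hT, h]
      exact Finset.mem_image.mpr ⟨(t, p.1, p.2), ht3, rfl⟩
    · exact h
  choose! f hf using hoff
  have hXne : X.offDiag.Nonempty := by
    obtain ⟨u, hu, v, hv, huv⟩ := Finset.one_lt_card.mp hC.1
    exact ⟨(u, v), Finset.mem_offDiag.mpr ⟨hu, hv, huv⟩⟩
  set e' := X.offDiag.inf' hXne (fun p => f p + Δ) with he'
  have hse' : s < e' := by
    rw [Finset.lt_inf'_iff]
    intro p hp
    have := (hf p hp).1.1
    linarith
  have hC' : IsDeltaClique E Δ X b e' := by
    refine ⟨hC.1, by linarith [hCs.2.1], ?_⟩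
    intro u hu v hv huv τ hτ1 hτ2
    rcases le_or_gt τ (max (s - Δ) b) with h | h
    · obtain ⟨t, ht1, ht2, ht3⟩ := hCs.2.2 u hu v hv huv τ hτ1 h
      exact ⟨t, ht1, le_trans ht2 (min_le_min le_rfl (le_of_lt hse')), ht3⟩
    · have hpuv : (u, v) ∈ X.offDiag := Finset.mem_offDiag.mpr ⟨hu, hv, huv⟩
      have h1 := (hf (u, v) hpuv).1
      have h2 := (hf (u, v) hpuv).2
      have hτb : b < τ := lt_of_le_of_lt (le_max_right _ _) h
      have hτs : s - Δ < τ := lt_of_le_of_lt (le_max_left _ _) h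
      have hile := Finset.inf'_le (fun p => f p + Δ) hpuv
      have hτe' : τ ≤ e' - Δ := by
        rcases le_max_iff.mp hτ2 with h' | h'
        · exact h'
        · linarith
      refine ⟨f (u, v), by linarith,
        le_min (by linarith [h1.2]) (by linarith [h1.2]), h2⟩
  have := hmem e' ⟨by linarith, hC'⟩
  linarith

/-- the infimum of valid left endpoints is attained -/
lemma dc_inf_attain (E : Finset (ℝ × α × α)) {Δ : ℝ} (hΔ : 0 < Δ) {X : Finset α} {c e : ℝ}
    {b0 : ℝ} (hb0 : b0 ≤ c) (hC : IsDeltaClique E Δ X b0 e) :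
    IsDeltaClique E Δ X (sInf {b' | b' ≤ c ∧ IsDeltaClique E Δ X b' e}) e ∧
      sInf {b' | b' ≤ c ∧ IsDeltaClique E Δ X b' e} ≤ c ∧
      ∀ b'', b'' ≤ c → IsDeltaClique E Δ X b'' e →
        sInf {b' | b' ≤ c ∧ IsDeltaClique E Δ X b' e} ≤ b'' := by
  classical
  set T : Finset ℝ := E.image Prod.fst with hT
  obtain ⟨t0, ht0T, _, _⟩ := dc_time_low E hC
  have hTne : T.Nonempty := ⟨t0, ht0T⟩
  set B : Set ℝ := {b' | b' ≤ c ∧ IsDeltaClique E Δ X b' e} with hB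
  have hBne : b0 ∈ B := ⟨hb0, hC⟩
  have hBbdd : BddBelow B := by
    refine ⟨T.min' hTne - Δ, fun b' hb' => ?_⟩
    obtain ⟨t, htT, h1, h2⟩ := dc_time_low E hb'.2
    have := Finset.min'_le T t htT
    linarith
  set i := sInf B with hi
  have hmem : ∀ b' ∈ B, i ≤ b' := fun _ h => csInf_le hBbdd h
  have hib0 : i ≤ b0 := hmem b0 hBne
  refine ⟨⟨hC.1, le_trans hib0 hC.2.1, ?_⟩, le_trans hib0 hb0,
    fun b'' h1 h2 => hmem b'' ⟨h1, h2⟩⟩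
  intro u hu v hv huv τ hτ1 hτ2
  by_cases hcase : ∃ b1 ∈ B, b1 ≤ τ
  · obtain ⟨b1, hb1, hb1τ⟩ := hcase
    have : τ ≤ max (e - Δ) b1 := le_trans hτ2 (max_le_max le_rfl (hmem b1 hb1))
    exact hb1.2.2.2 u hu v hv huv τ hb1τ this
  · push_neg at hcase
    rcases le_or_gt e (τ + Δ) with he' | he'
    · obtain ⟨t, ht1, ht2, ht3⟩ := hC.2.2 u hu v hv huv b0 le_rfl (le_max_right _ _)
      have hte : t ≤ e := le_trans ht2 (min_le_right _ _)
      exact ⟨t, le_trans (le_of_lt (hcase b0 hBne)) ht1,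
        le_min (by linarith) hte, ht3⟩
    · have hA : ∃ b1 ∈ B, ∀ x ∈ T.filter (fun x => τ + Δ < x), b1 + Δ < x := by
        by_cases hAne : (T.filter (fun x => τ + Δ < x)).Nonempty
        · have hc' : τ + Δ < (T.filter (fun x => τ + Δ < x)).min' hAne :=
            (Finset.mem_filter.mp ((T.filter _).min'_mem hAne)).2
          have hlt : i < (T.filter (fun x => τ + Δ < x)).min' hAne - Δ := by linarith
          obtain ⟨b1, hb1, hlt1⟩ := exists_lt_of_csInf_lt ⟨b0, hBne⟩ hlt
          refine ⟨b1, hb1, fun x hx => lt_of_lt_of_le ?_ (Finset.min'_le _ x hx)⟩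
          linarith
        · exact ⟨b0, hBne, fun x hx => absurd ⟨x, hx⟩ hAne⟩
      obtain ⟨b1, hb1B, hb1A⟩ := hA
      obtain ⟨t, ht1, ht2, ht3⟩ := hb1B.2.2.2 u hu v hv huv b1 le_rfl (le_max_right _ _)
      refine ⟨t, le_trans (le_of_lt (hcase b1 hb1B)) ht1,
        le_min ?_ (le_trans ht2 (min_le_right _ _)), ht3⟩
      by_contra hgt
      push_neg at hgt
      have htA : t ∈ T.filter (fun x => τ + Δ < x) :=
        Finset.mem_filter.mpr ⟨Finset.mem_image.mpr ⟨(t, u, v), ht3, rfl⟩, hgt⟩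
      have h1 := hb1A t htA
      have h2 : t ≤ b1 + Δ := le_trans ht2 (min_le_left _ _)
      linarith

end Aux

/-- every `Δ`-clique is contained in some maximal `Δ`-clique. -/
theorem exists_maximal_containing {α : Type*} [Fintype α] [DecidableEq α]
    (E : Finset (ℝ × α × α)) (Δ : ℝ) (hΔ : 0 < Δ)
    (hsym : ∀ t u v, (t, u, v) ∈ E → (t, v, u) ∈ E)
    (hloop : ∀ t v, (t, v, v) ∉ E)
    (X : Finset α) (b e : ℝ) (hC : IsDeltaClique E Δ X b e) :
    ∃ X' : Finset α, ∃ b' e' : ℝ,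
      IsMaxDeltaClique E Δ X' b' e' ∧ X ⊆ X' ∧ b' ≤ b ∧ e ≤ e' := by
  classical
  -- choose a node set of maximal cardinality among those admitting a clique containing [b,e]
  set S : Finset (Finset α) := Finset.univ.filter
    (fun Y => X ⊆ Y ∧ ∃ b' e', b' ≤ b ∧ e ≤ e' ∧ IsDeltaClique E Δ Y b' e') with hS
  have hXS : X ∈ S := Finset.mem_filter.mpr
    ⟨Finset.mem_univ _, Finset.Subset.refl X, b, e, le_rfl, le_rfl, hC⟩
  obtain ⟨X', hX'S, hmaxcard⟩ := Finset.exists_max_image S Finset.card ⟨X, hXS⟩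
  obtain ⟨-, hXX', bX, eX, hbX, heX, hCX⟩ := Finset.mem_filter.mp hX'S
  -- choose the maximal right endpoint, via the finite candidate set F
  set F : Finset ℝ := E.image (fun p => p.1 + Δ) with hF
  have hFmem : ∀ s : ℝ, s - Δ ∈ E.image Prod.fst → s ∈ F := by
    intro s hs
    obtain ⟨p, hp, hpe⟩ := Finset.mem_image.mp hs
    exact Finset.mem_image.mpr ⟨p, hp, by rw [hpe]; ring⟩
  set We : Finset ℝ := F.filter
    (fun e'' => e ≤ e'' ∧ ∃ b'', b'' ≤ b ∧ IsDeltaClique E Δ X' b'' e'') with hWe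
  obtain ⟨s0, hs0ge, hs0C, hs0T, -⟩ := dc_sup_attain E hΔ hCX
  have hWene : We.Nonempty :=
    ⟨s0, Finset.mem_filter.mpr ⟨hFmem s0 hs0T, le_trans heX hs0ge, bX, hbX, hs0C⟩⟩
  set eS := We.max' hWene with heS
  obtain ⟨heeS, b1, hb1b, hC1⟩ := (Finset.mem_filter.mp (We.max'_mem hWene)).2
  -- choose the minimal left endpoint for eS
  obtain ⟨hCb, hbSb, hBmin⟩ := dc_inf_attain E hΔ hb1b hC1
  set bS := sInf {b' | b' ≤ b ∧ IsDeltaClique E Δ X' b' eS} with hbS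
  refine ⟨X', bS, eS, ⟨hCb, ?_⟩, hXX', hbSb, heeS⟩
  intro X'' b'' e'' hC'' hsub hb'' he''
  have hb''b : b'' ≤ b := le_trans hb'' hbSb
  have hee'' : e ≤ e'' := le_trans heeS he''
  -- X'' = X'
  have hX''S : X'' ∈ S := Finset.mem_filter.mpr
    ⟨Finset.mem_univ _, le_trans hXX' hsub, b'', e'', hb''b, hee'', hC''⟩
  have hXeq : X'' = X' := (Finset.eq_of_subset_of_card_le hsub (hmaxcard X'' hX''S)).symm
  rw [hXeq] at hC''
  -- e'' = eS
  obtain ⟨s'', hs''ge, hs''C, hs''T, -⟩ := dc_sup_attain E hΔ hC''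
  have hs''W : s'' ∈ We := Finset.mem_filter.mpr
    ⟨hFmem s'' hs''T, le_trans hee'' hs''ge, b'', hb''b, hs''C⟩
  have he''eq : e'' = eS :=
    le_antisymm (le_trans hs''ge (We.le_max' s'' hs''W)) he''
  rw [he''eq] at hC''
  -- b'' = bS
  have hb''eq : b'' = bS := le_antisymm hb'' (hBmin b'' hb''b hC'')
  exact ⟨hXeq, hb''eq, he''eq⟩
end

section
/- Let G be a finite simple graph on vertex set V, let Δ > 0, and consider the link stream (V, E) where E = {(0, u, v) : u and v are adjacent in G}. Then for every C ⊆ V with |C| ≥ 2, C is a maximal clique of G if and only if (C, [−Δ, Δ]) is a maximal Δ-clique of the link stream (V, E). (Enumerating maximal cliques of a graph is a special case of enumerating maximal Δ-cliques of a link stream.) -/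
/-- for a finite simple graph `G` and the link stream whose links are
`(0, u, v)` for adjacent `u, v`, a set `C` with `|C| ≥ 2` is a maximal clique of `G`
iff `(C, [-Δ, Δ])` is a maximal `Δ`-clique of the link stream. -/
theorem graph_clique_iff_deltaClique {α : Type*} [Fintype α] [DecidableEq α]
    (G : SimpleGraph α) (Δ : ℝ) (hΔ : 0 < Δ)
    (E : Finset (ℝ × α × α))
    (hE : ∀ t : ℝ, ∀ u v : α, (t, u, v) ∈ E ↔ t = 0 ∧ G.Adj u v)
    (C : Finset α) (hcard : 2 ≤ C.card) :
    (G.IsClique (C : Set α) ∧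
        ∀ D : Finset α, G.IsClique (D : Set α) → C ⊆ D → D = C) ↔
      IsMaxDeltaClique E Δ C (-Δ) Δ := by
  have hmax0 : max (Δ - Δ) (-Δ) = 0 := by
    rw [sub_self]; exact max_eq_left (by linarith)
  constructor
  · rintro ⟨hclique, hmax⟩
    constructor
    · refine ⟨hcard, by linarith, ?_⟩
      intro u hu v hv huv τ hτ1 hτ2
      rw [hmax0] at hτ2
      refine ⟨0, hτ2, ?_, (hE 0 u v).2 ⟨rfl, hclique (by simpa using hu) (by simpa using hv) huv⟩⟩
      simp only [le_min_iff]; exact ⟨by linarith, by linarith⟩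
    · intro X' b' e' hX' hsub hb' he'
      obtain ⟨hcard', hbe', hint⟩ := hX'
      obtain ⟨u, hu, v, hv, huv⟩ := Finset.one_lt_card.mp hcard
      have hu' := hsub hu; have hv' := hsub hv
      have hXc : G.IsClique (X' : Set α) := by
        intro a ha b hb hab
        obtain ⟨t, ht1, ht2, htE⟩ := hint a (by simpa using ha) b (by simpa using hb) hab b' le_rfl (le_max_right _ _)
        exact ((hE t a b).1 htE).2
      refine ⟨hmax X' hXc hsub, ?_, ?_⟩
      · by_contra h
        have hb'lt : b' < -Δ := lt_of_le_of_ne hb' h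
        obtain ⟨t, ht1, ht2, htE⟩ := hint u hu' v hv' huv b' le_rfl (le_max_right _ _)
        have ht0 : t = 0 := ((hE t u v).1 htE).1
        have := (le_min_iff.mp ht2).1
        linarith
      · by_contra h
        have he'gt : Δ < e' := lt_of_le_of_ne he' (Ne.symm h)
        obtain ⟨t, ht1, ht2, htE⟩ := hint u hu' v hv' huv (max (e' - Δ) b') (le_max_right _ _) le_rfl
        have ht0 : t = 0 := ((hE t u v).1 htE).1
        have : e' - Δ ≤ max (e' - Δ) b' := le_max_left _ _
        linarith
  · rintro ⟨⟨_, _, hint⟩, hmax⟩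
    constructor
    · intro a ha b hb hab
      obtain ⟨t, ht1, ht2, htE⟩ := hint a (by simpa using ha) b (by simpa using hb) hab (-Δ) le_rfl (by rw [hmax0]; linarith)
      exact ((hE t a b).1 htE).2
    · intro D hD hsub
      have hDc : IsDeltaClique E Δ D (-Δ) Δ := by
        refine ⟨hcard.trans (Finset.card_le_card hsub), by linarith, ?_⟩
        intro u hu v hv huv τ hτ1 hτ2
        rw [hmax0] at hτ2
        refine ⟨0, hτ2, ?_, (hE 0 u v).2 ⟨rfl, hD (by simpa using hu) (by simpa using hv) huv⟩⟩
        simp only [le_min_iff]; exact ⟨by linarith, by linarith⟩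
      exact (hmax D (-Δ) Δ hDc hsub le_rfl le_rfl).1
end
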